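/- The Hausdorff content H^α_μ is upper semicontinuous from below: for any increasing sequence of sets E_1 ⊂ E_2 ⊂ ⋯ ⊂ K with union E, one has H^α_μ(E) = lim_{j→∞} H^α_μ(E_j). -/

import Mathlib

open MeasureTheory Set Filter
open scoped ENNReal NNReal Topology

noncomputable section

abbrev Pt (d : ℕ) := EuclideanSpace ℝ (Fin d)

/-- An iterated function system of contractive similitudes on ℝ^d with attractor `K`
satisfying the strong separation condition. -/
structure IFS (d m : ℕ) where
  S : Fin m → Pt d → Pt d
  r : Fin m → ℝ
  r_pos : ∀ i, 0 < r i
  r_lt_one : ∀ i, r i < 1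
  similitude : ∀ i x y, dist (S i x) (S i y) = r i * dist x y
  K : Set (Pt d)
  K_nonempty : K.Nonempty
  K_compact : IsCompact K
  K_invariant : K = ⋃ i, S i '' K
  ssc : Pairwise fun i j => Disjoint (S i '' K) (S j '' K)

namespace IFS

variable {d m : ℕ}

/-- The composition `S_{i₁} ∘ ⋯ ∘ S_{iₙ}` for the word `w = i₁ ⋯ iₙ`. -/
def cylMap (Φ : IFS d m) (w : List (Fin m)) : Pt d → Pt d :=
  w.foldr (fun i g => Φ.S i ∘ g) id

/-- The basic cube (cylinder set) `K_w = S_{i₁} ∘ ⋯ ∘ S_{iₙ}(K)`. -/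
def cyl (Φ : IFS d m) (w : List (Fin m)) : Set (Pt d) :=
  Φ.cylMap w '' Φ.K

/-- `μ` is the self-similar probability measure associated with the probability
vector `p` (with all `p i > 0`), i.e. `μ = ∑ i, p i • μ ∘ S i ⁻¹`, supported on `K`. -/
def SelfSimilar (Φ : IFS d m) (p : Fin m → ℝ≥0∞) (μ : Measure (Pt d)) : Prop :=
  (∑ i, p i = 1) ∧ (∀ i, 0 < p i) ∧ IsProbabilityMeasure μ ∧ μ Φ.K = 1 ∧
    μ = ∑ i, p i • μ.map (Φ.S i)

/-- The α-dimensional Hausdorff content on `K` associated with `μ`, defined via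
coverings by countable families of basic cubes; `s` is the Hausdorff dimension of `K`. -/
def hContent (Φ : IFS d m) (μ : Measure (Pt d)) (s α : ℝ) (E : Set (Pt d)) : ℝ≥0∞ :=
  ⨅ (C : Set (List (Fin m))) (_ : C.Countable) (_ : E ⊆ ⋃ w ∈ C, Φ.cyl w),
    ∑' w : C, μ (Φ.cyl w.1) ^ (α / s)

/-- The dyadic-type Hardy–Littlewood maximal operator over basic cubes containing `x`. -/
def maxOp (Φ : IFS d m) (μ : Measure (Pt d)) (f : Pt d → ℝ) (x : Pt d) : ℝ≥0∞ :=
  ⨆ (w : List (Fin m)) (_ : x ∈ Φ.cyl w),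
    (μ (Φ.cyl w))⁻¹ * ∫⁻ y in Φ.cyl w, ENNReal.ofReal |f y| ∂μ

end IFS

/-- The Choquet integral of `g` over `E` with respect to the monotone set function `ν`. -/
def choquetInt {X : Type*} (ν : Set X → ℝ≥0∞) (E : Set X) (g : X → ℝ≥0∞) : ℝ≥0∞ :=
  ∫⁻ t in Set.Ioi (0 : ℝ), ν {x ∈ E | ENNReal.ofReal t < g x}

/-- `log⁺ t = max (0, log t)`. -/
def posLog (t : ℝ) : ℝ := max 0 (Real.log t)

section HCProof

open IFS

variable {d m : ℕ}

namespace HCAux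

abbrev Wd (m : ℕ) := List (Fin m)

variable (Φ : IFS d m)

lemma S_continuous (i : Fin m) : Continuous (Φ.S i) := by
  have : LipschitzWith (Real.toNNReal (Φ.r i)) (Φ.S i) := by
    apply LipschitzWith.of_dist_le_mul
    intro x y
    rw [Φ.similitude i x y]
    rw [Real.coe_toNNReal _ (le_of_lt (Φ.r_pos i))]
  exact this.continuous

lemma S_inj (i : Fin m) : Function.Injective (Φ.S i) := by
  intro x y h
  have h2 := Φ.similitude i x y
  rw [h, dist_self] at h2
  have hr := Φ.r_pos i
  have : dist x y = 0 := by
    rcases mul_eq_zero.1 h2.symm with h' | h'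
    · exact absurd h' (ne_of_gt hr)
    · exact h'
  exact dist_eq_zero.1 this

lemma cyl_nil : Φ.cyl [] = Φ.K := by simp [IFS.cyl, IFS.cylMap]

lemma cyl_cons (i : Fin m) (w : Wd m) : Φ.cyl (i :: w) = Φ.S i '' Φ.cyl w := by
  rw [IFS.cyl, IFS.cyl, IFS.cylMap, List.foldr_cons]
  exact Set.image_comp _ _ _

lemma S_image_K_subset (i : Fin m) : Φ.S i '' Φ.K ⊆ Φ.K := by
  conv_rhs => rw [Φ.K_invariant]
  exact subset_iUnion_of_subset i le_rfl

lemma cyl_subset_K (w : Wd m) : Φ.cyl w ⊆ Φ.K := by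
  induction w with
  | nil => rw [cyl_nil]
  | cons i w ih =>
      rw [cyl_cons]
      exact (Set.image_mono ih).trans (S_image_K_subset Φ i)

lemma cylMap_continuous (w : Wd m) : Continuous (Φ.cylMap w) := by
  induction w with
  | nil => exact continuous_id
  | cons i w ih => exact (S_continuous Φ i).comp ih

lemma cyl_compact (w : Wd m) : IsCompact (Φ.cyl w) :=
  Φ.K_compact.image (cylMap_continuous Φ w)

lemma cyl_closed (w : Wd m) : IsClosed (Φ.cyl w) :=
  (cyl_compact Φ w).isClosed

lemma cyl_anti {u w : Wd m} (h : u <+: w) : Φ.cyl w ⊆ Φ.cyl u := by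
  obtain ⟨t, rfl⟩ := h
  induction u with
  | nil => rw [cyl_nil]; simpa using cyl_subset_K Φ t
  | cons i u ih =>
      rw [List.cons_append, cyl_cons, cyl_cons]
      exact Set.image_mono ih

lemma cyl_comparable : ∀ (u v : Wd m),
    (Φ.cyl u ∩ Φ.cyl v).Nonempty → u <+: v ∨ v <+: u := by
  intro u
  induction u with
  | nil => intro v _; exact Or.inl List.nil_prefix
  | cons i u ih =>
      intro v hne
      cases v with
      | nil => exact Or.inr List.nil_prefix
      | cons j v' =>
          rcases hne with ⟨x, hxu, hxv⟩
          rw [cyl_cons] at hxu hxv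
          have hij : i = j := by
            by_contra hne'
            have hd := Φ.ssc (show i ≠ j from hne')
            have h1 : x ∈ Φ.S i '' Φ.K := Set.image_mono (cyl_subset_K Φ u) hxu
            have h2 : x ∈ Φ.S j '' Φ.K := Set.image_mono (cyl_subset_K Φ v') hxv
            exact (Set.disjoint_iff.1 hd) ⟨h1, h2⟩
          subst hij
          rcases hxu with ⟨a, ha, hax⟩
          rcases hxv with ⟨b, hb, hbx⟩
          have hab : a = b := S_inj Φ i (hax.trans hbx.symm)
          subst hab
          rcases ih v' ⟨a, ha, hb⟩ with h | h
          · exact Or.inl (List.cons_prefix_cons.2 ⟨rfl, h⟩)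
          · exact Or.inr (List.cons_prefix_cons.2 ⟨rfl, h⟩)

lemma level_cover : ∀ (n : ℕ) (x : Pt d), x ∈ Φ.K →
    ∃ v : Wd m, v.length = n ∧ x ∈ Φ.cyl v := by
  intro n
  induction n with
  | zero => intro x hx; exact ⟨[], rfl, by rwa [cyl_nil]⟩
  | succ n ih =>
      intro x hx
      rw [Φ.K_invariant] at hx
      rcases Set.mem_iUnion.1 hx with ⟨i, y, hy, rfl⟩
      rcases ih y hy with ⟨v, hv, hyv⟩
      exact ⟨i :: v, by simp [hv], by rw [cyl_cons]; exact ⟨y, hyv, rfl⟩⟩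

lemma length_finite (n : ℕ) : {v : Wd m | v.length = n}.Finite := by
  induction n with
  | zero =>
      have : {v : Wd m | v.length = 0} = {[]} := by
        ext v; simp [List.length_eq_zero_iff]
      rw [this]; exact Set.finite_singleton _
  | succ n ih =>
      have : {v : Wd m | v.length = n + 1} =
          ⋃ i : Fin m, (fun w => i :: w) '' {v | v.length = n} := by
        ext v
        simp only [Set.mem_setOf_eq, Set.mem_iUnion, Set.mem_image]
        constructor
        · intro h
          cases v with
          | nil => simp at h
          | cons i w => exact ⟨i, w, by simpa using h, rfl⟩
        · rintro ⟨i, w, hw, rfl⟩; simp [hw]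
      rw [this]
      exact Set.finite_iUnion fun i => ih.image _

lemma cyl_open (w : Wd m) : ∃ O : Set (Pt d), IsOpen O ∧ Φ.K ∩ O = Φ.cyl w := by
  refine ⟨(⋃ v ∈ {v : Wd m | v.length = w.length ∧ v ≠ w}, Φ.cyl v)ᶜ, ?_, ?_⟩
  · rw [isOpen_compl_iff]
    apply Set.Finite.isClosed_biUnion
    · exact (length_finite (m := m) w.length).subset (fun v hv => hv.1)
    · exact fun v _ => cyl_closed Φ v
  · ext x
    constructor
    · rintro ⟨hxK, hxO⟩
      rcases level_cover Φ w.length x hxK with ⟨v, hvl, hxv⟩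
      by_cases hvw : v = w
      · rwa [hvw] at hxv
      · exact absurd (Set.mem_biUnion
          (show v ∈ {v : Wd m | v.length = w.length ∧ v ≠ w} from ⟨hvl, hvw⟩) hxv) hxO
    · intro hx
      refine ⟨cyl_subset_K Φ w hx, ?_⟩
      intro hmem
      rcases Set.mem_iUnion₂.1 hmem with ⟨v, ⟨hvl, hvw⟩, hxv⟩
      rcases cyl_comparable Φ v w ⟨x, hxv, hx⟩ with h | h
      · exact hvw (h.eq_of_length hvl)
      · exact hvw (h.eq_of_length (by omega)).symm

/-! ### cost of covers -/

variable (h : Wd m → ℝ≥0∞)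

def cost (C : Set (Wd m)) : ℝ≥0∞ := ∑' w : C, h w.1

lemma cost_eq_tsum_indicator (C : Set (Wd m)) : cost h C = ∑' w, C.indicator h w :=
  tsum_subtype C h

lemma cost_mono {A B : Set (Wd m)} (hAB : A ⊆ B) : cost h A ≤ cost h B := by
  rw [cost_eq_tsum_indicator, cost_eq_tsum_indicator]
  exact Summable.tsum_le_tsum (fun w => Set.indicator_le_indicator_of_subset hAB (fun _ => zero_le) w)
    ENNReal.summable ENNReal.summable

lemma cost_union_le (A B : Set (Wd m)) : cost h (A ∪ B) ≤ cost h A + cost h B := by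
  rw [cost_eq_tsum_indicator, cost_eq_tsum_indicator, cost_eq_tsum_indicator, ← ENNReal.tsum_add]
  refine Summable.tsum_le_tsum (fun w => ?_) ENNReal.summable ENNReal.summable
  by_cases hA : w ∈ A
  · rw [Set.indicator_of_mem (Set.mem_union_left _ hA), Set.indicator_of_mem hA]
    exact le_add_right le_rfl
  · by_cases hB : w ∈ B
    · rw [Set.indicator_of_mem (Set.mem_union_right _ hB), Set.indicator_of_mem hB]
      exact le_add_left le_rfl
    · rw [Set.indicator_of_notMem (fun hc => hc.elim hA hB)]
      exact zero_le

lemma cost_union_disjoint {A B : Set (Wd m)} (hd : Disjoint A B) :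
    cost h (A ∪ B) = cost h A + cost h B :=
  ENNReal.summable.tsum_union_disjoint hd ENNReal.summable

lemma cost_finset (t : Finset (Wd m)) : cost h ↑t = ∑ w ∈ t, h w :=
  Finset.tsum_subtype t h

lemma finset_sum_le_cost {t : Finset (Wd m)} {A : Set (Wd m)} (ht : ↑t ⊆ A) :
    ∑ w ∈ t, h w ≤ cost h A := by
  rw [← cost_finset]
  exact cost_mono h ht

lemma cost_eq_iSup (A : Set (Wd m)) :
    cost h A = ⨆ t : {t : Finset (Wd m) // ↑t ⊆ A}, ∑ w ∈ t.1, h w := by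
  apply le_antisymm
  · rw [cost, ENNReal.tsum_eq_iSup_sum]
    apply iSup_le
    intro sfin
    have hsub : ↑(sfin.image Subtype.val) ⊆ A := by
      intro w hw
      simp only [Finset.coe_image, Set.mem_image] at hw
      obtain ⟨v, _, rfl⟩ := hw
      exact v.2
    refine le_trans ?_ (le_iSup _ (⟨sfin.image Subtype.val, hsub⟩ : {t : Finset (Wd m) // ↑t ⊆ A}))
    rw [Finset.sum_image (fun x _ y _ hxy => Subtype.val_injective hxy)]
  · exact iSup_le fun t => finset_sum_le_cost h t.2

lemma cost_disjoint_family_le {ι : Type*} [DecidableEq ι] (V : Finset ι) (D : ι → Set (Wd m))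
    (P C : Set (Wd m))
    (hP : P ⊆ C) (hD : ∀ v ∈ V, D v ⊆ C) (hPD : ∀ v ∈ V, Disjoint P (D v))
    (hDD : ∀ v ∈ V, ∀ u ∈ V, v ≠ u → Disjoint (D v) (D u)) :
    cost h P + ∑ v ∈ V, cost h (D v) ≤ cost h C := by
  induction V using Finset.induction generalizing P with
  | empty => simpa using cost_mono h hP
  | @insert a V ha ih =>
      rw [Finset.sum_insert ha]
      have h1 : cost h P + (cost h (D a) + ∑ v ∈ V, cost h (D v))
          = cost h (P ∪ D a) + ∑ v ∈ V, cost h (D v) := by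
        rw [cost_union_disjoint h (hPD a (Finset.mem_insert_self a V)), add_assoc]
      rw [h1]
      apply ih
      · exact Set.union_subset hP (hD a (Finset.mem_insert_self a V))
      · exact fun v hv => hD v (Finset.mem_insert_of_mem hv)
      · intro v hv
        refine Set.disjoint_union_left.2 ⟨hPD v (Finset.mem_insert_of_mem hv), ?_⟩
        exact hDD a (Finset.mem_insert_self a V) v (Finset.mem_insert_of_mem hv)
          (fun hc => ha (hc ▸ hv))
      · exact fun v hv u hu hne => hDD v (Finset.mem_insert_of_mem hv) u
          (Finset.mem_insert_of_mem hu) hne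

end HCAux

end HCProof
section Part2
open HCAux IFS

variable {d m : ℕ} (Φ : IFS d m) (μ : MeasureTheory.Measure (Pt d)) (s α : ℝ)

/-- the weight function -/
noncomputable def hw : Wd m → ℝ≥0∞ := fun w => μ (Φ.cyl w) ^ (α / s)

variable {Φ μ s α}

lemma hw_superadd (hθ0 : 0 < α / s) (hθ1 : α / s ≤ 1) (hμK : μ Φ.K = 1)
    {w : Wd m} {D : Set (Wd m)} (hD : ∀ u ∈ D, w <+: u)
    (hcov : Φ.cyl w ⊆ ⋃ u ∈ D, Φ.cyl u) :
    hw Φ μ s α w ≤ cost (hw Φ μ s α) D := by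
  set a := μ (Φ.cyl w) with ha
  by_cases ha0 : a = 0
  · rw [hw]; rw [← ha, ha0, ENNReal.zero_rpow_of_pos hθ0]; exact zero_le
  have ha1 : a ≤ 1 := by
    rw [← hμK]; exact measure_mono (cyl_subset_K Φ w)
  have hatop : a ≠ ⊤ := fun hc => by simp [hc] at ha1
  have hX : a ≤ ∑' u : D, μ (Φ.cyl u.1) := by
    calc a ≤ μ (⋃ u ∈ D, Φ.cyl u) := measure_mono hcov
    _ ≤ ∑' u : D, μ (Φ.cyl u.1) := measure_biUnion_le μ D.to_countable _
  have key : ∀ u : D, a ^ (α / s) * (μ (Φ.cyl u.1) * a⁻¹) ≤ hw Φ μ s α u.1 := by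
    intro u
    have h1 : μ (Φ.cyl u.1) ≤ a := measure_mono (cyl_anti Φ (hD u.1 u.2))
    have h2 : μ (Φ.cyl u.1) * a⁻¹ ≤ 1 := by
      calc μ (Φ.cyl u.1) * a⁻¹ ≤ a * a⁻¹ := mul_le_mul' h1 le_rfl
      _ = 1 := ENNReal.mul_inv_cancel ha0 hatop
    have h3 : (μ (Φ.cyl u.1) * a⁻¹) ^ (1 : ℝ) ≤ (μ (Φ.cyl u.1) * a⁻¹) ^ (α / s) :=
      ENNReal.rpow_le_rpow_of_exponent_ge h2 hθ1
    rw [ENNReal.rpow_one] at h3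
    calc a ^ (α / s) * (μ (Φ.cyl u.1) * a⁻¹)
        ≤ a ^ (α / s) * (μ (Φ.cyl u.1) * a⁻¹) ^ (α / s) := mul_le_mul' le_rfl h3
      _ = (a * (μ (Φ.cyl u.1) * a⁻¹)) ^ (α / s) :=
          (ENNReal.mul_rpow_of_nonneg _ _ (le_of_lt hθ0)).symm
      _ = hw Φ μ s α u.1 := by
          rw [hw, mul_comm (μ (Φ.cyl u.1)) a⁻¹, ← mul_assoc,
            ENNReal.mul_inv_cancel ha0 hatop, one_mul]
  calc hw Φ μ s α w = a ^ (α / s) * (a * a⁻¹) := by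
        rw [ENNReal.mul_inv_cancel ha0 hatop, mul_one, hw]
    _ ≤ a ^ (α / s) * ((∑' u : D, μ (Φ.cyl u.1)) * a⁻¹) :=
        mul_le_mul' le_rfl (mul_le_mul' hX le_rfl)
    _ = ∑' u : D, a ^ (α / s) * (μ (Φ.cyl u.1) * a⁻¹) := by
        exact (by rw [ENNReal.tsum_mul_left, ENNReal.tsum_mul_right] :
          (∑' u : D, a ^ (α / s) * (μ (Φ.cyl u.1) * a⁻¹))
            = a ^ (α / s) * ((∑' u : D, μ (Φ.cyl u.1)) * a⁻¹)).symm
    _ ≤ ∑' u : D, hw Φ μ s α u.1 :=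
        Summable.tsum_le_tsum (fun u => key u) ENNReal.summable ENNReal.summable
    _ = cost (hw Φ μ s α) D := rfl

lemma hContent_eq_iInf (E : Set (Pt d)) :
    Φ.hContent μ s α E =
      ⨅ (C : Set (Wd m)) (_ : E ⊆ ⋃ w ∈ C, Φ.cyl w), cost (hw Φ μ s α) C := by
  rw [IFS.hContent]
  exact iInf_congr fun C => by rw [iInf_pos C.to_countable]; rfl

lemma hContent_le_cost {E : Set (Pt d)} {C : Set (Wd m)} (hcov : E ⊆ ⋃ w ∈ C, Φ.cyl w) :
    Φ.hContent μ s α E ≤ cost (hw Φ μ s α) C := by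
  rw [hContent_eq_iInf]
  exact (iInf_le _ C).trans (iInf_le _ hcov)

lemma hContent_mono {E E' : Set (Pt d)} (hEE : E ⊆ E') :
    Φ.hContent μ s α E ≤ Φ.hContent μ s α E' := by
  rw [hContent_eq_iInf, hContent_eq_iInf]
  exact le_iInf fun C => le_iInf fun hcov => (iInf_le _ C).trans (iInf_le _ (hEE.trans hcov))

lemma hContent_le_one (hμK : μ Φ.K = 1) {E : Set (Pt d)} (hE : E ⊆ Φ.K) :
    Φ.hContent μ s α E ≤ 1 := by
  have hcov : E ⊆ ⋃ w ∈ ({[]} : Set (Wd m)), Φ.cyl w := by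
    intro x hx
    exact Set.mem_biUnion rfl (by rw [cyl_nil]; exact hE hx)
  refine (hContent_le_cost hcov).trans ?_
  rw [cost, tsum_singleton ([] : Wd m) (hw Φ μ s α), hw, cyl_nil, hμK, ENNReal.one_rpow]

lemma hContent_ne_top (hμK : μ Φ.K = 1) {E : Set (Pt d)} (hE : E ⊆ Φ.K) :
    Φ.hContent μ s α E ≠ ⊤ := by
  intro hc
  have := hContent_le_one hμK hE (Φ := Φ) (s := s) (α := α)
  rw [hc] at this
  exact absurd this (by simp)

lemma exists_cover {E : Set (Pt d)} (hne : Φ.hContent μ s α E ≠ ⊤)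
    {ε : ℝ≥0∞} (hε : 0 < ε) :
    ∃ C : Set (Wd m), (E ⊆ ⋃ w ∈ C, Φ.cyl w) ∧
      cost (hw Φ μ s α) C ≤ Φ.hContent μ s α E + ε := by
  have hlt : Φ.hContent μ s α E < Φ.hContent μ s α E + ε :=
    ENNReal.lt_add_right hne (ne_of_gt hε)
  conv_lhs at hlt => rw [hContent_eq_iInf]
  rw [iInf_lt_iff] at hlt
  obtain ⟨C, hC⟩ := hlt
  rw [iInf_lt_iff] at hC
  obtain ⟨hcov, hC⟩ := hC
  exact ⟨C, hcov, le_of_lt hC⟩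

end Part2
section Part3
open HCAux IFS
open scoped Classical

variable {d m : ℕ} {Φ : IFS d m} {μ : MeasureTheory.Measure (Pt d)} {s α : ℝ}

lemma coarsen (hθ0 : 0 < α / s) (hθ1 : α / s ≤ 1) (hμK : μ Φ.K = 1)
    (f : ℕ → Wd m) (hanti : ∀ k l, f k <+: f l → f k = f l) (n : ℕ)
    {C : Set (Wd m)} (hcov : (⋃ k ∈ Finset.range n, Φ.cyl (f k)) ⊆ ⋃ w ∈ C, Φ.cyl w) :
    ∃ C' : Set (Wd m), (∀ k < n, ∃ v ∈ C', v <+: f k) ∧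
      cost (hw Φ μ s α) C' ≤ cost (hw Φ μ s α) C := by
  set h := hw Φ μ s α with hh
  set P : Set (Wd m) := C ∩ {v | ∃ k < n, v <+: f k} with hP
  set bad : Finset ℕ := (Finset.range n).filter (fun k => ¬∃ v ∈ C, v <+: f k) with hbad
  set V : Finset (Wd m) := bad.image f with hV
  set D : Wd m → Set (Wd m) := fun v => C ∩ {u | v <+: u} with hD
  refine ⟨P ∪ ↑V, ?_, ?_⟩
  · intro k hk
    by_cases hgood : ∃ v ∈ C, v <+: f k
    · obtain ⟨v, hvC, hvp⟩ := hgood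
      exact ⟨v, Or.inl ⟨hvC, ⟨k, hk, hvp⟩⟩, hvp⟩
    · refine ⟨f k, Or.inr ?_, List.prefix_refl _⟩
      simp only [hV, Finset.coe_image, Set.mem_image, Finset.mem_coe]
      exact ⟨k, Finset.mem_filter.2 ⟨Finset.mem_range.2 hk, hgood⟩, rfl⟩
  · -- facts about members of V
    have hVmem : ∀ v ∈ V, ∃ k, k < n ∧ v = f k ∧ ¬∃ u ∈ C, u <+: f k := by
      intro v hv
      simp only [hV, Finset.mem_image, hbad, Finset.mem_filter, Finset.mem_range] at hv
      obtain ⟨k, ⟨hk, hbadk⟩, rfl⟩ := hv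
      exact ⟨k, hk, rfl, hbadk⟩
    -- superadditivity : h v ≤ cost of D v for v in V
    have hsup : ∀ v ∈ V, h v ≤ cost h (D v) := by
      intro v hv
      obtain ⟨k, hk, rfl, hbadk⟩ := hVmem v hv
      refine hw_superadd hθ0 hθ1 hμK (fun u hu => hu.2) ?_
      intro x hx
      have hx2 : x ∈ ⋃ w ∈ C, Φ.cyl w :=
        hcov (Set.mem_biUnion (Finset.mem_range.2 hk) hx)
      rcases Set.mem_iUnion₂.1 hx2 with ⟨u, huC, hxu⟩
      rcases cyl_comparable Φ u (f k) ⟨x, hxu, hx⟩ with hc | hc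
      · exact absurd ⟨u, huC, hc⟩ hbadk
      · exact Set.mem_biUnion (⟨huC, hc⟩ : u ∈ D (f k)) hxu
    have hcost1 : cost h (P ∪ ↑V) ≤ cost h P + ∑ v ∈ V, h v := by
      refine (cost_union_le h P ↑V).trans ?_
      rw [cost_finset]
    have hcost2 : ∑ v ∈ V, h v ≤ ∑ v ∈ V, cost h (D v) :=
      Finset.sum_le_sum hsup
    -- disjointness facts
    have hPD : ∀ v ∈ V, Disjoint P (D v) := by
      intro v hv
      obtain ⟨k, hk, rfl, hbadk⟩ := hVmem v hv
      rw [Set.disjoint_left]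
      rintro u ⟨huC, l, hl, hulp⟩ ⟨_, hfku⟩
      -- f k <+: u and u <+: f l  ⇒ f k <+: f l ⇒ f k = f l ⇒ u = f k ∈ C, contradiction
      have h1 : f k <+: f l := hfku.trans hulp
      have h2 : f k = f l := hanti k l h1
      have h3 : u = f k := by
        have hl2 := hulp.length_le
        rw [← h2] at hl2
        exact (hfku.eq_of_length (le_antisymm hfku.length_le hl2)).symm
      exact hbadk ⟨u, huC, h3 ▸ List.prefix_refl _⟩
    have hDD : ∀ v ∈ V, ∀ u ∈ V, v ≠ u → Disjoint (D v) (D u) := by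
      intro v hv u hu hvu
      rw [Set.disjoint_left]
      rintro w ⟨_, hvw⟩ ⟨_, huw⟩
      rcases List.prefix_or_prefix_of_prefix hvw huw with hc | hc
      · obtain ⟨k, _, rfl, _⟩ := hVmem v hv
        obtain ⟨l, _, rfl, _⟩ := hVmem u hu
        exact hvu (hanti k l hc)
      · obtain ⟨k, _, rfl, _⟩ := hVmem v hv
        obtain ⟨l, _, rfl, _⟩ := hVmem u hu
        exact hvu (hanti l k hc).symm
    calc cost h (P ∪ ↑V) ≤ cost h P + ∑ v ∈ V, cost h (D v) :=
          hcost1.trans (add_le_add_right hcost2 _)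
      _ ≤ cost h C := cost_disjoint_family_le h V D P C Set.inter_subset_left
          (fun v _ => Set.inter_subset_left) hPD hDD

end Part3
section Part4
open HCAux IFS

variable {d m : ℕ} {Φ : IFS d m} {μ : MeasureTheory.Measure (Pt d)} {s α : ℝ}

/-- Continuity from below along increasing finite unions of an antichain of cylinders. -/
lemma antichain_union (hθ0 : 0 < α / s) (hθ1 : α / s ≤ 1) (hμK : μ Φ.K = 1)
    (f : ℕ → Wd m) (hanti : ∀ k l, f k <+: f l → f k = f l) :
    Φ.hContent μ s α (⋃ k, Φ.cyl (f k)) ≤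
      ⨆ n, Φ.hContent μ s α (⋃ k ∈ Finset.range n, Φ.cyl (f k)) := by
  set h := hw Φ μ s α with hh
  set R := ⨆ n, Φ.hContent μ s α (⋃ k ∈ Finset.range n, Φ.cyl (f k)) with hR
  have hFK : ∀ n, (⋃ k ∈ Finset.range n, Φ.cyl (f k)) ⊆ Φ.K := fun n =>
    Set.iUnion₂_subset fun k _ => cyl_subset_K Φ (f k)
  have hRone : R ≤ 1 := iSup_le fun n => hContent_le_one hμK (hFK n)
  have hRtop : R ≠ ⊤ := fun hc => by rw [hc] at hRone; exact absurd hRone (by simp)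
  apply ENNReal.le_of_forall_pos_le_add
  intro ε hε _
  have hεE : (0 : ℝ≥0∞) < ↑ε := ENNReal.coe_pos.2 hε
  -- choose near-optimal covers and coarsen them
  have hCs : ∀ n : ℕ, ∃ C' : Set (Wd m), (∀ k < n, ∃ v ∈ C', v <+: f k) ∧
      cost h C' ≤ R + ↑ε := by
    intro n
    have hne := hContent_ne_top hμK (hFK n) (μ := μ) (s := s) (α := α)
    obtain ⟨C, hcov, hcost⟩ := exists_cover hne hεE
    obtain ⟨C', hpref, hcost'⟩ := coarsen hθ0 hθ1 hμK f hanti n hcov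
    refine ⟨C', hpref, hcost'.trans (hcost.trans ?_)⟩
    exact add_le_add_left (le_iSup (fun n => Φ.hContent μ s α
      (⋃ k ∈ Finset.range n, Φ.cyl (f k))) n) _
  choose Cs hCs1 hCs2 using hCs
  -- ultrafilter limit of the covers
  let 𝒰 : Ultrafilter ℕ := Ultrafilter.of atTop
  set Cinf : Set (Wd m) := {v | {n | v ∈ Cs n} ∈ 𝒰} with hCinf
  have hcovinf : (⋃ k, Φ.cyl (f k)) ⊆ ⋃ w ∈ Cinf, Φ.cyl w := by
    intro x hx
    rcases Set.mem_iUnion.1 hx with ⟨k, hxk⟩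
    have hple : ∃ v, v <+: f k ∧ {n | v ∈ Cs n} ∈ 𝒰 := by
      by_contra hc
      push_neg at hc
      have hfin : {v : Wd m | v <+: f k}.Finite :=
        Set.Finite.subset (f k).inits.finite_toSet
          (fun v hv => by simpa [List.mem_inits] using hv)
      have hcompl : (⋂ v ∈ {v : Wd m | v <+: f k}, {n | v ∈ Cs n}ᶜ) ∈ (𝒰 : Filter ℕ) :=
        (Filter.biInter_mem hfin).2 fun v hv =>
          Ultrafilter.compl_mem_iff_notMem.2 (hc v hv)
      have hgt : {n | k < n} ∈ 𝒰 := Ultrafilter.of_le atTop (Filter.mem_atTop (k + 1))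
      obtain ⟨n, hn1, hn2⟩ := Filter.nonempty_of_mem (Filter.inter_mem hcompl hgt)
      obtain ⟨v, hvC, hvp⟩ := hCs1 n k hn2
      have := Set.mem_iInter₂.1 hn1 v hvp
      exact this hvC
    obtain ⟨v, hvp, hvU⟩ := hple
    exact Set.mem_biUnion hvU (cyl_anti Φ hvp hxk)
  refine (hContent_le_cost hcovinf).trans ?_
  rw [cost_eq_iSup]
  apply iSup_le
  rintro ⟨t, ht⟩
  have hint : (⋂ v ∈ (↑t : Set (Wd m)), {n | v ∈ Cs n}) ∈ (𝒰 : Filter ℕ) :=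
    (Filter.biInter_mem t.finite_toSet).2 fun v hv => ht hv
  obtain ⟨n, hn⟩ := Filter.nonempty_of_mem hint
  have htsub : ↑t ⊆ Cs n := fun v hv => Set.mem_iInter₂.1 hn v hv
  exact (finset_sum_le_cost h htsub).trans (hCs2 n)

/-- Strong subadditivity of the content. -/
lemma strong_subadd (A B : Set (Pt d)) :
    Φ.hContent μ s α (A ∪ B) + Φ.hContent μ s α (A ∩ B) ≤
      Φ.hContent μ s α A + Φ.hContent μ s α B := by
  set h := hw Φ μ s α with hh
  by_cases hA : Φ.hContent μ s α A = ⊤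
  · rw [hA, top_add]; exact le_top
  by_cases hB : Φ.hContent μ s α B = ⊤
  · rw [hB, add_top]; exact le_top
  apply ENNReal.le_of_forall_pos_le_add
  intro ε hε _
  have hε2 : (0 : ℝ≥0∞) < ↑ε / 2 := by
    apply ENNReal.div_pos (ENNReal.coe_pos.2 hε).ne' (by norm_num)
  obtain ⟨CA, hcovA, hcostA⟩ := exists_cover hA hε2
  obtain ⟨CB, hcovB, hcostB⟩ := exists_cover hB hε2
  set Cu : Set (Wd m) := {u | u ∈ CA ∪ CB ∧ ∀ u' ∈ CA ∪ CB, u' <+: u → u' = u} with hCu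
  set Ci : Set (Wd m) := {u | u ∈ CA ∧ ∃ w ∈ CB, w <+: u ∧ w ≠ u} ∪
      {u | u ∈ CB ∧ ∃ w ∈ CA, w <+: u ∧ w ≠ u} ∪ (CA ∩ CB) with hCi
  -- Cu covers A ∪ B
  have hcovu : A ∪ B ⊆ ⋃ w ∈ Cu, Φ.cyl w := by
    intro x hx
    have hxS : ∃ u, u ∈ CA ∪ CB ∧ x ∈ Φ.cyl u := by
      rcases hx with hx | hx
      · rcases Set.mem_iUnion₂.1 (hcovA hx) with ⟨u, huC, hxu⟩
        exact ⟨u, Or.inl huC, hxu⟩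
      · rcases Set.mem_iUnion₂.1 (hcovB hx) with ⟨u, huC, hxu⟩
        exact ⟨u, Or.inr huC, hxu⟩
    set S : Set (Wd m) := {u | u ∈ CA ∪ CB ∧ x ∈ Φ.cyl u} with hS
    have hSne : (List.length '' S).Nonempty := by
      obtain ⟨u, hu1, hu2⟩ := hxS
      exact ⟨u.length, u, ⟨hu1, hu2⟩, rfl⟩
    obtain ⟨u, huS, hulen⟩ := Nat.sInf_mem hSne
    refine Set.mem_biUnion ⟨huS.1, ?_⟩ huS.2
    intro u' hu' hpref
    have hu'S : u' ∈ S := ⟨hu', cyl_anti Φ hpref huS.2⟩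
    have h1 : sInf (List.length '' S) ≤ u'.length := Nat.sInf_le ⟨u', hu'S, rfl⟩
    rw [← hulen] at h1
    exact hpref.eq_of_length (le_antisymm hpref.length_le h1)
  -- Ci covers A ∩ B
  have hcovi : A ∩ B ⊆ ⋃ w ∈ Ci, Φ.cyl w := by
    rintro x ⟨hxA, hxB⟩
    rcases Set.mem_iUnion₂.1 (hcovA hxA) with ⟨uA, hA1, hxuA⟩
    rcases Set.mem_iUnion₂.1 (hcovB hxB) with ⟨uB, hB1, hxuB⟩
    by_cases heq : uA = uB
    · exact Set.mem_biUnion (Or.inr ⟨hA1, heq ▸ hB1⟩) hxuA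
    rcases cyl_comparable Φ uA uB ⟨x, hxuA, hxuB⟩ with hc | hc
    · exact Set.mem_biUnion (Or.inl (Or.inr ⟨hB1, uA, hA1, hc, heq⟩)) hxuB
    · exact Set.mem_biUnion (Or.inl (Or.inl ⟨hA1, uB, hB1, hc,
        fun hcc => heq hcc.symm⟩)) hxuA
  -- cost estimate
  have hcost : cost h Cu + cost h Ci ≤ cost h CA + cost h CB := by
    rw [cost_eq_tsum_indicator, cost_eq_tsum_indicator, cost_eq_tsum_indicator,
      cost_eq_tsum_indicator, ← ENNReal.tsum_add, ← ENNReal.tsum_add]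
    refine Summable.tsum_le_tsum (fun w => ?_) ENNReal.summable ENNReal.summable
    by_cases hu : w ∈ Cu
    · by_cases hi : w ∈ Ci
      · have hwAB : w ∈ CA ∧ w ∈ CB := by
          rcases hi with (⟨hw1, w', hw2, hw3, hw4⟩ | ⟨hw1, w', hw2, hw3, hw4⟩) | hw1
          · exact absurd (hu.2 w' (Or.inr hw2) hw3) hw4
          · exact absurd (hu.2 w' (Or.inl hw2) hw3) hw4
          · exact hw1
        rw [Set.indicator_of_mem hu, Set.indicator_of_mem hi,
          Set.indicator_of_mem hwAB.1, Set.indicator_of_mem hwAB.2]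
      · rw [Set.indicator_of_mem hu, Set.indicator_of_notMem hi, add_zero]
        rcases hu.1 with hw | hw
        · rw [Set.indicator_of_mem hw]; exact le_self_add
        · rw [Set.indicator_of_mem (s := CB) hw]; exact le_add_self
    · rw [Set.indicator_of_notMem hu, zero_add]
      by_cases hi : w ∈ Ci
      · have hwAB : w ∈ CA ∪ CB := by
          rcases hi with (⟨hw1, _⟩ | ⟨hw1, _⟩) | hw1
          · exact Or.inl hw1
          · exact Or.inr hw1
          · exact Or.inl hw1.1
        rw [Set.indicator_of_mem hi]
        rcases hwAB with hw | hw
        · rw [Set.indicator_of_mem hw]; exact le_self_add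
        · rw [Set.indicator_of_mem (s := CB) hw]; exact le_add_self
      · rw [Set.indicator_of_notMem hi]; exact zero_le
  calc Φ.hContent μ s α (A ∪ B) + Φ.hContent μ s α (A ∩ B)
      ≤ cost h Cu + cost h Ci := add_le_add (hContent_le_cost hcovu) (hContent_le_cost hcovi)
    _ ≤ cost h CA + cost h CB := hcost
    _ ≤ (Φ.hContent μ s α A + ↑ε / 2) + (Φ.hContent μ s α B + ↑ε / 2) :=
        add_le_add hcostA hcostB
    _ = Φ.hContent μ s α A + Φ.hContent μ s α B + ↑ε := by
        rw [add_add_add_comm, ENNReal.add_halves]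

end Part4
section Part5
open HCAux IFS

theorem hContent_tendsto' (d m : ℕ) (Φ : IFS d m) (p : Fin m → ℝ≥0∞)
    (μ : MeasureTheory.Measure (Pt d)) (hμ : Φ.SelfSimilar p μ)
    (s : ℝ) (hs : 0 < s) (hdim : ∑ i, Φ.r i ^ s = 1)
    (α : ℝ) (hα : 0 < α) (hαs : α ≤ s)
    (E : ℕ → Set (Pt d)) (hmono : Monotone E) (hE : ∀ j, E j ⊆ Φ.K) :
    Filter.Tendsto (fun j => Φ.hContent μ s α (E j)) Filter.atTop
      (nhds (Φ.hContent μ s α (⋃ j, E j))) := by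
  have hμK : μ Φ.K = 1 := hμ.2.2.2.1
  have hθ0 : 0 < α / s := div_pos hα hs
  have hθ1 : α / s ≤ 1 := (div_le_one hs).2 hαs
  have hmonoH : Monotone fun j => Φ.hContent μ s α (E j) :=
    fun i j hij => hContent_mono (hmono hij)
  suffices hsup : (⨆ j, Φ.hContent μ s α (E j)) = Φ.hContent μ s α (⋃ j, E j) by
    rw [← hsup]; exact tendsto_atTop_iSup hmonoH
  refine le_antisymm (iSup_le fun j => hContent_mono (Set.subset_iUnion E j)) ?_
  set L := ⨆ j, Φ.hContent μ s α (E j) with hL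
  have hEK : ∀ j, Φ.hContent μ s α (E j) ≠ ⊤ := fun j => hContent_ne_top hμK (hE j)
  apply ENNReal.le_of_forall_pos_le_add
  intro ε hε _
  -- geometric series bound
  have hgeom : ∀ n : ℕ, (∑ i ∈ Finset.range n, (2⁻¹ : ℝ≥0∞) ^ (i + 1)) ≤ 1 := by
    intro n
    calc ∑ i ∈ Finset.range n, (2⁻¹ : ℝ≥0∞) ^ (i + 1)
        ≤ ∑' i : ℕ, (2⁻¹ : ℝ≥0∞) ^ (i + 1) := ENNReal.sum_le_tsum _
      _ = ∑' i : ℕ, (2⁻¹ : ℝ≥0∞) * (2⁻¹ : ℝ≥0∞) ^ i := by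
          congr 1; funext i; rw [pow_succ, mul_comm]
      _ = (2⁻¹ : ℝ≥0∞) * (1 - 2⁻¹)⁻¹ := by
          rw [ENNReal.tsum_mul_left, ENNReal.tsum_geometric]
      _ = 1 := by
          rw [ENNReal.one_sub_inv_two]
          exact ENNReal.mul_inv_cancel (by norm_num) (by norm_num)
  -- near-optimal covers
  have hCs : ∀ j : ℕ, ∃ C : Set (Wd m), (E j ⊆ ⋃ w ∈ C, Φ.cyl w) ∧
      cost (hw Φ μ s α) C ≤ Φ.hContent μ s α (E j) + ↑ε * (2⁻¹ : ℝ≥0∞) ^ (j + 1) := by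
    intro j
    have hpos : (0 : ℝ≥0∞) < ↑ε * (2⁻¹ : ℝ≥0∞) ^ (j + 1) := by
      apply ENNReal.mul_pos (ENNReal.coe_pos.2 hε).ne'
      exact (pow_ne_zero _ (by norm_num))
    exact exists_cover (hEK j) hpos
  choose C hcov hcost using hCs
  set DD : ℕ → Set (Wd m) := fun j => ⋃ i ∈ Finset.range (j + 1), C i with hDD
  set V : ℕ → Set (Pt d) := fun i => ⋃ w ∈ C i, Φ.cyl w with hV
  set Wt : ℕ → Set (Pt d) := fun j => ⋃ w ∈ DD j, Φ.cyl w with hWt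
  have hDD0 : DD 0 = C 0 := by
    simp only [hDD, zero_add, Finset.range_one, Finset.set_biUnion_singleton]
  have hDDsucc : ∀ j, DD (j + 1) = DD j ∪ C (j + 1) := by
    intro j
    simp only [hDD, Finset.range_add_one, Finset.set_biUnion_insert]
    rw [Set.union_comm]
  have hDDmono : Monotone DD := by
    intro i j hij
    apply Set.biUnion_subset_biUnion_left
    exact Finset.coe_subset.2 (Finset.range_subset_range.2 (by omega))
  have hWt0 : Wt 0 = V 0 := by
    rw [show Wt 0 = ⋃ w ∈ DD 0, Φ.cyl w from rfl, hDD0]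
  have hWtsucc : ∀ j, Wt (j + 1) = Wt j ∪ V (j + 1) := by
    intro j
    rw [show Wt (j + 1) = ⋃ w ∈ DD (j + 1), Φ.cyl w from rfl, hDDsucc j,
      Set.biUnion_union]
  have hWtmono : Monotone Wt := fun i j hij =>
    Set.biUnion_subset_biUnion_left (hDDmono hij)
  have hEV : ∀ j, E j ⊆ V j := hcov
  have hVW : ∀ j, V j ⊆ Wt j := by
    intro j
    apply Set.biUnion_subset_biUnion_left
    intro w hw
    exact Set.mem_biUnion (Finset.self_mem_range_succ j) hw
  have hEW : ∀ j, E j ⊆ Wt j := fun j => (hEV j).trans (hVW j)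
  have hVcost : ∀ j, Φ.hContent μ s α (V j) ≤
      Φ.hContent μ s α (E j) + ↑ε * (2⁻¹ : ℝ≥0∞) ^ (j + 1) :=
    fun j => (hContent_le_cost subset_rfl).trans (hcost j)
  -- inductive bound on the content of Wt j
  have hWtcost : ∀ j, Φ.hContent μ s α (Wt j) ≤ Φ.hContent μ s α (E j) +
      ↑ε * ∑ i ∈ Finset.range (j + 1), (2⁻¹ : ℝ≥0∞) ^ (i + 1) := by
    intro j
    induction j with
    | zero =>
        rw [hWt0, Finset.sum_range_one]
        exact hVcost 0
    | succ j ih =>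
        have step : Φ.hContent μ s α (Wt (j + 1)) + Φ.hContent μ s α (E j) ≤
            (Φ.hContent μ s α (E (j + 1)) +
              ↑ε * ∑ i ∈ Finset.range (j + 2), (2⁻¹ : ℝ≥0∞) ^ (i + 1)) +
              Φ.hContent μ s α (E j) := by
          calc Φ.hContent μ s α (Wt (j + 1)) + Φ.hContent μ s α (E j)
              ≤ Φ.hContent μ s α (Wt j ∪ V (j + 1)) +
                Φ.hContent μ s α (Wt j ∩ V (j + 1)) := by
                rw [hWtsucc j]
                refine add_le_add_right (hContent_mono ?_) _
                exact Set.subset_inter (hEW j) ((hmono (Nat.le_succ j)).trans (hEV (j + 1)))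
            _ ≤ Φ.hContent μ s α (Wt j) + Φ.hContent μ s α (V (j + 1)) :=
                strong_subadd _ _
            _ ≤ (Φ.hContent μ s α (E j) +
                  ↑ε * ∑ i ∈ Finset.range (j + 1), (2⁻¹ : ℝ≥0∞) ^ (i + 1)) +
                (Φ.hContent μ s α (E (j + 1)) + ↑ε * (2⁻¹ : ℝ≥0∞) ^ (j + 2)) :=
                add_le_add ih (hVcost (j + 1))
            _ = (Φ.hContent μ s α (E (j + 1)) +
                  ↑ε * ∑ i ∈ Finset.range (j + 2), (2⁻¹ : ℝ≥0∞) ^ (i + 1)) +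
                  Φ.hContent μ s α (E j) := by
                have hsum : (∑ i ∈ Finset.range (j + 2), (2⁻¹ : ℝ≥0∞) ^ (i + 1))
                    = (∑ i ∈ Finset.range (j + 1), (2⁻¹ : ℝ≥0∞) ^ (i + 1))
                      + (2⁻¹ : ℝ≥0∞) ^ (j + 2) := Finset.sum_range_succ _ _
                rw [hsum, mul_add]
                ring
        exact (ENNReal.add_le_add_iff_right (hEK j)).1 step
  have hWtle : ∀ j, Φ.hContent μ s α (Wt j) ≤ L + ↑ε := by
    intro j
    refine (hWtcost j).trans
      (add_le_add (le_iSup (fun j => Φ.hContent μ s α (E j)) j) ?_)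
    calc ↑ε * ∑ i ∈ Finset.range (j + 1), (2⁻¹ : ℝ≥0∞) ^ (i + 1)
        ≤ ↑ε * 1 := mul_le_mul' le_rfl (hgeom (j + 1))
      _ = ↑ε := mul_one _
  -- the antichain basis of the union of all covers
  set D : Set (Wd m) := ⋃ i, C i with hD
  set T : Set (Wd m) := {u | u ∈ D ∧ ∀ u' ∈ D, u' <+: u → u' = u} with hT
  have hTcov : ∀ w ∈ D, ∃ u ∈ T, u <+: w := by
    intro w hwD
    set S : Set (Wd m) := {u | u ∈ D ∧ u <+: w} with hS
    have hSne : (List.length '' S).Nonempty := ⟨w.length, w, ⟨hwD, List.prefix_refl w⟩, rfl⟩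
    obtain ⟨u, huS, hulen⟩ := Nat.sInf_mem hSne
    refine ⟨u, ⟨huS.1, ?_⟩, huS.2⟩
    intro u' hu'D hpref
    have hu'S : u' ∈ S := ⟨hu'D, hpref.trans huS.2⟩
    have h1 : sInf (List.length '' S) ≤ u'.length := Nat.sInf_le ⟨u', hu'S, rfl⟩
    rw [← hulen] at h1
    exact hpref.eq_of_length (le_antisymm hpref.length_le h1)
  by_cases hTne : T.Nonempty
  · obtain ⟨f, hfT⟩ := (Set.to_countable T).exists_eq_range hTne
    have hmemT : ∀ k, f k ∈ T := fun k => hfT ▸ Set.mem_range_self k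
    have hanti : ∀ k l, f k <+: f l → f k = f l := by
      intro k l hp
      exact (hmemT l).2 (f k) (hmemT k).1 hp
    have hsubT : (⋃ j, E j) ⊆ ⋃ k, Φ.cyl (f k) := by
      intro x hx
      rcases Set.mem_iUnion.1 hx with ⟨j, hxj⟩
      rcases Set.mem_iUnion₂.1 (hEV j hxj) with ⟨w, hwC, hxw⟩
      have hwD : w ∈ D := Set.mem_iUnion.2 ⟨j, hwC⟩
      obtain ⟨u, huT, hup⟩ := hTcov w hwD
      obtain ⟨k, hk⟩ := (hfT ▸ huT : u ∈ Set.range f)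
      exact Set.mem_iUnion.2 ⟨k, hk ▸ cyl_anti Φ hup hxw⟩
    refine (hContent_mono hsubT).trans
      ((antichain_union hθ0 hθ1 hμK f hanti).trans ?_)
    apply iSup_le
    intro n
    -- the compact set F n is contained in some Wt J
    choose O hO1 hO2 using fun w => cyl_open Φ w
    set OO : ℕ → Set (Pt d) := fun j => ⋃ w ∈ DD j, O w with hOO
    have hOOopen : ∀ j, IsOpen (OO j) := fun j => isOpen_biUnion fun w _ => hO1 w
    have hOOmono : Monotone OO := fun i j hij =>
      Set.biUnion_subset_biUnion_left (hDDmono hij)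
    have hKOO : ∀ j, Φ.K ∩ OO j = Wt j := by
      intro j
      rw [hOO, Set.inter_iUnion₂]
      exact Set.iUnion₂_congr fun w _ => hO2 w
    have hFcomp : IsCompact (⋃ k ∈ Finset.range n, Φ.cyl (f k)) := by
      apply Set.Finite.isCompact_biUnion (Finset.range n).finite_toSet
      intro k _
      exact cyl_compact Φ (f k)
    have hFK2 : (⋃ k ∈ Finset.range n, Φ.cyl (f k)) ⊆ Φ.K :=
      Set.iUnion₂_subset fun k _ => cyl_subset_K Φ (f k)
    have hFsub : (⋃ k ∈ Finset.range n, Φ.cyl (f k)) ⊆ ⋃ j, OO j := by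
      refine Set.iUnion₂_subset fun k _ => ?_
      have hfkD : f k ∈ D := (hmemT k).1
      rcases Set.mem_iUnion.1 hfkD with ⟨i, hfi⟩
      refine Set.subset_iUnion_of_subset i ?_
      intro x hx
      have hxW : x ∈ Wt i := Set.mem_biUnion
        (Set.mem_biUnion (Finset.self_mem_range_succ i) hfi : f k ∈ DD i) hx
      rw [← hKOO i] at hxW
      exact hxW.2
    obtain ⟨t, ht⟩ := hFcomp.elim_finite_subcover OO hOOopen hFsub
    have hsubJ : (⋃ k ∈ Finset.range n, Φ.cyl (f k)) ⊆ OO (t.sup id) := by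
      refine ht.trans (Set.iUnion₂_subset fun j hj => ?_)
      exact hOOmono (Finset.le_sup (f := id) hj)
    have hsubWt : (⋃ k ∈ Finset.range n, Φ.cyl (f k)) ⊆ Wt (t.sup id) := by
      rw [← hKOO]
      exact Set.subset_inter hFK2 hsubJ
    exact (hContent_mono hsubWt).trans (hWtle _)
  · -- T is empty, hence D is empty and all E j are empty
    have hDemp : D = ∅ := by
      by_contra hc
      obtain ⟨w, hw⟩ := Set.nonempty_iff_ne_empty.2 hc
      obtain ⟨u, huT, _⟩ := hTcov w hw
      exact hTne ⟨u, huT⟩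
    have hcovE : (⋃ j, E j) ⊆ ⋃ w ∈ (∅ : Set (Wd m)), Φ.cyl w := by
      intro x hx
      rcases Set.mem_iUnion.1 hx with ⟨j, hxj⟩
      rcases Set.mem_iUnion₂.1 (hEV j hxj) with ⟨w, hwC, _⟩
      have : w ∈ D := Set.mem_iUnion.2 ⟨j, hwC⟩
      rw [hDemp] at this
      exact absurd this (Set.notMem_empty w)
    refine (hContent_le_cost hcovE).trans ?_
    have : cost (hw Φ μ s α) (∅ : Set (Wd m)) = 0 := by
      rw [cost]
      exact tsum_empty
    rw [this]
    exact zero_le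

end Part5

/-- Continuity from below of the Hausdorff content along increasing sequences of sets. -/
theorem hContent_tendsto (d m : ℕ) (Φ : IFS d m) (p : Fin m → ℝ≥0∞)
    (μ : Measure (Pt d)) (hμ : Φ.SelfSimilar p μ)
    (s : ℝ) (hs : 0 < s) (hdim : ∑ i, Φ.r i ^ s = 1)
    (α : ℝ) (hα : 0 < α) (hαs : α ≤ s)
    (E : ℕ → Set (Pt d)) (hmono : Monotone E) (hE : ∀ j, E j ⊆ Φ.K) :
    Tendsto (fun j => Φ.hContent μ s α (E j)) atTop
      (𝓝 (Φ.hContent μ s α (⋃ j, E j))) := by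
  exact hContent_tendsto' d m Φ p μ hμ s hs hdim α hα hαs E hmono hE
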